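/- Let n ≥ 2 and let Y ⊂ ℙ_n be a Kronecker–Weierstrass variety of type (d;s) with s ≥ 1. Then every subset of Y consisting of points in general linear position has at most n+2 elements. -/

import Mathlib

noncomputable section

open scoped BigOperators

/-- The set of points of `ℙ_n = ℙ(k^{n+1})` lying in the projectivization of the
linear subspace `W ⊆ k^{n+1}`. -/
def projSet (k : Type*) [Field k] {n : ℕ} (W : Submodule k (Fin (n + 1) → k)) :
    Set (Projectivization k (Fin (n + 1) → k)) :=
  {x | x.rep ∈ W}

/-- `C ⊆ ℙ_n` is a rational normal curve of degree `d`, spanning the `d`-dimensional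
linear subspace of `ℙ_n` given by the `(d+1)`-dimensional subspace `L ⊆ k^{n+1}`:
namely, `C` is the image of the degree-`d` Veronese map `ℙ¹ → ℙ_n` composed with an
injective linear map `A : k^{d+1} → k^{n+1}`, and `L = im A`. -/
def IsRNC (k : Type*) [Field k] (n d : ℕ)
    (C : Set (Projectivization k (Fin (n + 1) → k)))
    (L : Submodule k (Fin (n + 1) → k)) : Prop :=
  ∃ A : (Fin (d + 1) → k) →ₗ[k] (Fin (n + 1) → k), Function.Injective A ∧
    L = LinearMap.range A ∧
    C = {x | ∃ s t c : k, c ≠ 0 ∧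
          c • x.rep = A fun i => s ^ (d - (i : ℕ)) * t ^ (i : ℕ)}

/-- `Y ⊆ ℙ_n` is a Kronecker–Weierstrass variety of type `(d;s)` with `d ≥ 1` and
curve part `C`: there are integers `n₁, …, n_s` with `1 ≤ nᵢ ≤ n - 1` and
`d + n₁ + ⋯ + n_s = n`, a rational normal curve `C` of degree `d` spanning a
`d`-dimensional linear subspace `L`, and linear subspaces `Lᵢ` of dimension `nᵢ`,
such that each `L ∩ Lᵢ` is a single point lying on `C`, the `Lᵢ` are pairwise
disjoint, and `Y = C ∪ L₁ ∪ ⋯ ∪ L_s`. -/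
def IsKWpos (k : Type*) [Field k] (n d s : ℕ)
    (Y C : Set (Projectivization k (Fin (n + 1) → k))) : Prop :=
  1 ≤ d ∧
  ∃ (nn : Fin s → ℕ) (L : Submodule k (Fin (n + 1) → k))
    (W : Fin s → Submodule k (Fin (n + 1) → k)),
    (∀ i, 1 ≤ nn i ∧ nn i ≤ n - 1) ∧ (d + ∑ i, nn i = n) ∧
    IsRNC k n d C L ∧
    (∀ i, Module.finrank k (W i) = nn i + 1) ∧
    (∀ i, ∃ p ∈ C, projSet k L ∩ projSet k (W i) = {p}) ∧
    (∀ i j, i ≠ j → projSet k (W i) ∩ projSet k (W j) = ∅) ∧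
    Y = C ∪ ⋃ i, projSet k (W i)

/-- `Y ⊆ ℙ_n` is a Kronecker–Weierstrass variety of type `(0;s)` with distinguished
point `y`: there are integers `n₁, …, n_s` with `1 ≤ nᵢ ≤ n - 1` and
`n₁ + ⋯ + n_s = n`, and linear subspaces `Lᵢ` of dimension `nᵢ`, all passing
through `y`, any two of which meet exactly at `y`, with `Y = L₁ ∪ ⋯ ∪ L_s`. -/
def IsKW0 (k : Type*) [Field k] (n s : ℕ)
    (Y : Set (Projectivization k (Fin (n + 1) → k)))
    (y : Projectivization k (Fin (n + 1) → k)) : Prop :=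
  ∃ (nn : Fin s → ℕ) (W : Fin s → Submodule k (Fin (n + 1) → k)),
    (∀ i, 1 ≤ nn i ∧ nn i ≤ n - 1) ∧ (∑ i, nn i = n) ∧
    (∀ i, Module.finrank k (W i) = nn i + 1) ∧
    (∀ i, y ∈ projSet k (W i)) ∧
    (∀ i j, i ≠ j → projSet k (W i) ∩ projSet k (W j) = {y}) ∧
    Y = ⋃ i, projSet k (W i)

/-- A set of points of `ℙ_n` is in general linear position if representative vectors
of any at most `n + 1` distinct points of it are linearly independent over `k`. -/
def InGenLinPos (k : Type*) [Field k] (n : ℕ)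
    (Z : Set (Projectivization k (Fin (n + 1) → k))) : Prop :=
  ∀ (m : ℕ) (f : Fin m → Projectivization k (Fin (n + 1) → k)),
    m ≤ n + 1 → Function.Injective f → (∀ i, f i ∈ Z) →
    LinearIndependent k fun i => (f i).rep

/-- Auxiliary: the dimension of a sup of submodules each meeting a base submodule
nontrivially. -/
lemma aux_finrank_sup {k : Type*} [Field k] {N : ℕ}
    (B : Submodule k (Fin (N + 1) → k)) {s : ℕ}
    (W : Fin s → Submodule k (Fin (N + 1) → k)) (J : Finset (Fin s))
    (h : ∀ i ∈ J, ∃ v : Fin (N + 1) → k, v ≠ 0 ∧ v ∈ B ⊓ W i) :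
    Module.finrank k ↥(B ⊔ ⨆ i ∈ J, W i) + J.card
      ≤ Module.finrank k ↥B + ∑ i ∈ J, Module.finrank k ↥(W i) := by
  classical
  induction J using Finset.induction_on with
  | empty =>
    have he : (⨆ i ∈ (∅ : Finset (Fin s)), W i) = ⊥ := by simp
    rw [he, sup_bot_eq]
    simp
  | @insert a J ha ih =>
    have hJ := ih (fun i hi => h i (Finset.mem_insert_of_mem hi))
    obtain ⟨v, hv0, hvm⟩ := h a (Finset.mem_insert_self a J)
    rw [Submodule.mem_inf] at hvm
    rw [Finset.iSup_insert]
    set X := ⨆ i ∈ J, W i with hX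
    have hre : B ⊔ (W a ⊔ X) = (B ⊔ X) ⊔ W a := by
      rw [sup_comm (W a) X, ← sup_assoc]
    rw [hre]
    have h1 : 1 ≤ Module.finrank k ↥((B ⊔ X) ⊓ W a) := by
      have hle : Submodule.span k {v} ≤ (B ⊔ X) ⊓ W a := by
        rw [Submodule.span_le, Set.singleton_subset_iff]
        exact ⟨Submodule.mem_sup_left hvm.1, hvm.2⟩
      calc 1 = Module.finrank k ↥(Submodule.span k {v}) :=
            (finrank_span_singleton hv0).symm
        _ ≤ _ := Submodule.finrank_mono hle
    have h2 := Submodule.finrank_sup_add_finrank_inf_eq (B ⊔ X) (W a)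
    rw [Finset.sum_insert ha, Finset.card_insert_of_notMem ha]
    omega

/-- Auxiliary: a set in general linear position meets the projectivization of a
subspace of dimension at most `n` in at most `finrank` many points. -/
lemma aux_key {k : Type*} [Field k] {N : ℕ}
    {S : Set (Projectivization k (Fin (N + 1) → k))}
    (hgen : InGenLinPos k N S) (V : Submodule k (Fin (N + 1) → k))
    (hV : Module.finrank k V ≤ N) :
    (S ∩ projSet k V).Finite ∧ (S ∩ projSet k V).ncard ≤ Module.finrank k V := by
  classical
  set D := Module.finrank k V with hD
  have habs : ∀ T : Finset (Projectivization k (Fin (N + 1) → k)),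
      ↑T ⊆ S ∩ projSet k V → T.card ≤ D := by
    intro T hT
    by_contra hlt
    push_neg at hlt
    obtain ⟨T', hT'sub, hT'card⟩ := Finset.exists_subset_card_eq (show D + 1 ≤ T.card from hlt)
    have hcoe : (T' : Set _) ⊆ S ∩ projSet k V :=
      fun x hx => hT (Finset.coe_subset.2 hT'sub hx)
    have hcard : Fintype.card {x // x ∈ T'} = D + 1 := by
      simpa using hT'card
    set e : Fin (D + 1) ≃ {x // x ∈ T'} := (Fintype.equivFinOfCardEq hcard).symm with he
    set f : Fin (D + 1) → Projectivization k (Fin (N + 1) → k) :=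
      fun i => ((e i : {x // x ∈ T'}) : Projectivization k (Fin (N + 1) → k)) with hf
    have hinj : Function.Injective f := Subtype.val_injective.comp e.injective
    have hmem : ∀ i, f i ∈ S := fun i => (hcoe (e i).2).1
    have hmemV : ∀ i, (f i).rep ∈ V := fun i => (hcoe (e i).2).2
    have hli := hgen (D + 1) f (by omega) hinj hmem
    set g : Fin (D + 1) → V := fun i => ⟨(f i).rep, hmemV i⟩ with hg
    have hgli : LinearIndependent k g := by
      apply LinearIndependent.of_comp V.subtype
      exact hli
    have hcb := hgli.fintype_card_le_finrank
    simp only [Fintype.card_fin] at hcb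
    omega
  have hfin : (S ∩ projSet k V).Finite := by
    by_contra hinf
    obtain ⟨t, hts, htfin, htcard⟩ :=
      (show (S ∩ projSet k V).Infinite from hinf).exists_subset_ncard_eq (D + 1)
    have h1 := habs htfin.toFinset (by simpa using hts)
    rw [Set.ncard_eq_toFinset_card t htfin] at htcard
    omega
  refine ⟨hfin, ?_⟩
  have h1 := habs hfin.toFinset (by simp)
  rwa [Set.ncard_eq_toFinset_card _ hfin]

/-- Auxiliary: combining a cover by two projectivized subspaces. -/
lemma aux_cover {k : Type*} [Field k] {N : ℕ}
    {S : Set (Projectivization k (Fin (N + 1) → k))}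
    (hgen : InGenLinPos k N S) (V V' : Submodule k (Fin (N + 1) → k))
    (hV : Module.finrank k V ≤ N) (hV' : Module.finrank k V' ≤ N)
    (hcov : S ⊆ projSet k V ∪ projSet k V') :
    S.Finite ∧ S.ncard ≤ Module.finrank k V + Module.finrank k V' := by
  have hkey := aux_key hgen V hV
  have hkey' := aux_key hgen V' hV'
  have hSeq : S = (S ∩ projSet k V) ∪ (S ∩ projSet k V') := by
    rw [← Set.inter_union_distrib_left, Set.inter_eq_self_of_subset_left hcov]
  constructor
  · rw [hSeq]; exact hkey.1.union hkey'.1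
  · calc S.ncard = ((S ∩ projSet k V) ∪ (S ∩ projSet k V')).ncard := by rw [← hSeq]
      _ ≤ (S ∩ projSet k V).ncard + (S ∩ projSet k V').ncard :=
          Set.ncard_union_le _ _
      _ ≤ _ := Nat.add_le_add hkey.2 hkey'.2

/-- Let `n ≥ 2` and let `Y ⊆ ℙ_n` be a Kronecker–Weierstrass
variety of type `(d;s)` with `s ≥ 1`. Then every subset of `Y` consisting of points
in general linear position has at most `n + 2` elements. -/
theorem statement6 (k : Type*) [Field k] [IsAlgClosed k] (n : ℕ) (hn : 2 ≤ n)
    (d s : ℕ) (hs : 1 ≤ s) (Y : Set (Projectivization k (Fin (n + 1) → k)))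
    (hY : (∃ C, IsKWpos k n d s Y C) ∨ (d = 0 ∧ ∃ y, IsKW0 k n s Y y))
    (S : Set (Projectivization k (Fin (n + 1) → k)))
    (hSY : S ⊆ Y) (hgen : InGenLinPos k n S) :
    S.Finite ∧ S.ncard ≤ n + 2 := by
  classical
  have hi0 : Nonempty (Fin s) := ⟨⟨0, hs⟩⟩
  obtain ⟨i0⟩ := hi0
  rcases hY with ⟨C, hd, nn, L, W, hnn, hsum, hRNC, hdim, hpt, hdisj, hYeq⟩ |
    ⟨hd0, y, nn, W, hnn, hsum, hdim, hy, hmeet, hYeq⟩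
  · -- d ≥ 1 case
    obtain ⟨A, hAinj, hL, hC⟩ := hRNC
    set J : Finset (Fin s) := Finset.univ.erase i0 with hJ
    have hJcard : J.card = s - 1 := by
      rw [hJ, Finset.card_erase_of_mem (Finset.mem_univ i0), Finset.card_univ,
        Fintype.card_fin]
    -- intersection points give nonzero vectors in L ⊓ W i
    have hmeetL : ∀ i ∈ J, ∃ v : Fin (n + 1) → k, v ≠ 0 ∧ v ∈ L ⊓ W i := by
      intro i _
      obtain ⟨p, hpC, hint⟩ := hpt i
      have hp : p ∈ projSet k L ∩ projSet k (W i) := by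
        rw [hint]; exact rfl
      exact ⟨p.rep, p.rep_nonzero, Submodule.mem_inf.2 ⟨hp.1, hp.2⟩⟩
    set V : Submodule k (Fin (n + 1) → k) := L ⊔ ⨆ i ∈ J, W i with hV
    have hLrank : Module.finrank k ↥L ≤ d + 1 := by
      rw [hL]
      calc Module.finrank k ↥(LinearMap.range A) ≤ Module.finrank k (Fin (d + 1) → k) :=
            LinearMap.finrank_range_le A
        _ = d + 1 := Module.finrank_fin_fun k
    have hsupr := aux_finrank_sup L W J hmeetL
    rw [← hV] at hsupr
    have hWsum : ∑ i ∈ J, Module.finrank k ↥(W i) = ∑ i ∈ J, (nn i + 1) :=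
      Finset.sum_congr rfl (fun i _ => hdim i)
    have hsJ : ∑ i ∈ J, nn i + nn i0 = ∑ i, nn i := by
      rw [hJ]; exact Finset.sum_erase_add _ _ (Finset.mem_univ i0)
    have hsplitsum : ∑ i ∈ J, (nn i + 1) = ∑ i ∈ J, nn i + J.card := by
      rw [Finset.sum_add_distrib, Finset.sum_const, smul_eq_mul, mul_one]
    have hnn0 := hnn i0
    have hVrank : Module.finrank k ↥V ≤ n := by
      rw [hWsum, hsplitsum] at hsupr
      omega
    have hVrank' : Module.finrank k ↥V ≤ d + 1 + ∑ i ∈ J, nn i := by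
      rw [hWsum, hsplitsum] at hsupr
      omega
    have hCsub : C ⊆ projSet k L := by
      intro x hx
      rw [hC] at hx
      obtain ⟨a, b, c, hc0, hcx⟩ := hx
      have : x.rep = A (c⁻¹ • fun i : Fin (d + 1) => a ^ (d - (i : ℕ)) * b ^ (i : ℕ)) := by
        rw [map_smul, ← hcx, smul_smul, inv_mul_cancel₀ hc0, one_smul]
      rw [projSet, Set.mem_setOf_eq, hL]
      exact ⟨_, this.symm⟩
    have hcov : S ⊆ projSet k V ∪ projSet k (W i0) := by
      intro x hx
      have hxY := hSY hx
      rw [hYeq] at hxY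
      rcases hxY with hxC | hxW
      · left
        exact Submodule.mem_sup_left (hCsub hxC)
      · rw [Set.mem_iUnion] at hxW
        obtain ⟨i, hxi⟩ := hxW
        by_cases hii : i = i0
        · right; rw [← hii]; exact hxi
        · left
          have hW_le : W i ≤ V := by
            refine le_sup_of_le_right ?_
            exact le_iSup₂ (f := fun i _ => W i) i
              (Finset.mem_erase.2 ⟨hii, Finset.mem_univ i⟩)
          exact hW_le hxi
    have hWi0rank : Module.finrank k ↥(W i0) ≤ n := by
      rw [hdim i0]; omega
    obtain ⟨hfin, hcard⟩ := aux_cover hgen V (W i0) hVrank hWi0rank hcov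
    refine ⟨hfin, ?_⟩
    have hWi0 : Module.finrank k ↥(W i0) = nn i0 + 1 := hdim i0
    omega
  · -- d = 0 case
    set B : Submodule k (Fin (n + 1) → k) := Submodule.span k {y.rep} with hB
    have hBrank : Module.finrank k ↥B = 1 := finrank_span_singleton y.rep_nonzero
    set J : Finset (Fin s) := Finset.univ.erase i0 with hJ
    have hJcard : J.card = s - 1 := by
      rw [hJ, Finset.card_erase_of_mem (Finset.mem_univ i0), Finset.card_univ,
        Fintype.card_fin]
    have hmeetB : ∀ i ∈ J, ∃ v : Fin (n + 1) → k, v ≠ 0 ∧ v ∈ B ⊓ W i := by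
      intro i _
      exact ⟨y.rep, y.rep_nonzero,
        Submodule.mem_inf.2 ⟨Submodule.mem_span_singleton_self _, hy i⟩⟩
    set V : Submodule k (Fin (n + 1) → k) := B ⊔ ⨆ i ∈ J, W i with hV
    have hsupr := aux_finrank_sup B W J hmeetB
    rw [← hV] at hsupr
    have hWsum : ∑ i ∈ J, Module.finrank k ↥(W i) = ∑ i ∈ J, (nn i + 1) :=
      Finset.sum_congr rfl (fun i _ => hdim i)
    have hsJ : ∑ i ∈ J, nn i + nn i0 = ∑ i, nn i := by
      rw [hJ]; exact Finset.sum_erase_add _ _ (Finset.mem_univ i0)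
    have hsplitsum : ∑ i ∈ J, (nn i + 1) = ∑ i ∈ J, nn i + J.card := by
      rw [Finset.sum_add_distrib, Finset.sum_const, smul_eq_mul, mul_one]
    have hnn0 := hnn i0
    have hVrank : Module.finrank k ↥V ≤ n := by
      rw [hWsum, hsplitsum, hBrank] at hsupr
      omega
    have hVrank' : Module.finrank k ↥V ≤ 1 + ∑ i ∈ J, nn i := by
      rw [hWsum, hsplitsum, hBrank] at hsupr
      omega
    have hcov : S ⊆ projSet k V ∪ projSet k (W i0) := by
      intro x hx
      have hxY := hSY hx
      rw [hYeq, Set.mem_iUnion] at hxY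
      obtain ⟨i, hxi⟩ := hxY
      by_cases hii : i = i0
      · right; rw [← hii]; exact hxi
      · left
        have hW_le : W i ≤ V := by
          refine le_sup_of_le_right ?_
          exact le_iSup₂ (f := fun i _ => W i) i
            (Finset.mem_erase.2 ⟨hii, Finset.mem_univ i⟩)
        exact hW_le hxi
    have hWi0rank : Module.finrank k ↥(W i0) ≤ n := by
      rw [hdim i0]; omega
    obtain ⟨hfin, hcard⟩ := aux_cover hgen V (W i0) hVrank hWi0rank hcov
    refine ⟨hfin, ?_⟩
    have hWi0 : Module.finrank k ↥(W i0) = nn i0 + 1 := hdim i0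
    omega
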